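/- arXiv:2401.11563 — 9 statements merged into one kernel-verified Lean document; each statement's English description precedes it below -/
import Mathlib

section
/- Let V be a symmetric positive definite real d×d matrix, θ̂ ∈ ℝ^d, β ≥ 0, and B := {θ ∈ ℝ^d : ‖θ̂ − θ‖_V ≤ β}. Let α, r_b ∈ ℝ and let φ, ψ ∈ ℝ^d with ‖φ‖₂ ≤ 1. If ψᵀθ̂ ≥ β/√(λ_min(V)) + (1 − α)·r_b and φᵀθ̂ ≥ ψᵀθ̂, then for every v ∈ B one has φᵀv ≥ (1 − α)·r_b. -/
open Matrix

open scoped Classical in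
/-- smallest eigenvalue of a real matrix (junk value 0 if not Hermitian) -/
noncomputable def lamMin {d : ℕ} (V : Matrix (Fin d) (Fin d) ℝ) : ℝ :=
  if h : V.IsHermitian then ⨅ i, h.eigenvalues i else 0

open scoped Classical in
/-- largest eigenvalue of a real matrix (junk value 0 if not Hermitian) -/
noncomputable def lamMax {d : ℕ} (V : Matrix (Fin d) (Fin d) ℝ) : ℝ :=
  if h : V.IsHermitian then ⨆ i, h.eigenvalues i else 0

/-- weighted norm ‖z‖_V = √(zᵀ V z) -/
noncomputable def wnorm {d : ℕ} (V : Matrix (Fin d) (Fin d) ℝ) (z : Fin d → ℝ) : ℝ :=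
  Real.sqrt (z ⬝ᵥ V.mulVec z)

/-- Euclidean norm of a vector in ℝ^d -/
noncomputable def eucNorm {d : ℕ} (z : Fin d → ℝ) : ℝ :=
  Real.sqrt (z ⬝ᵥ z)

/-- key Rayleigh-quotient bound: `λ_min(V) ‖z‖² ≤ zᵀ V z` for positive definite `V`. -/
lemma lamMin_dotProduct_le {d : ℕ} (V : Matrix (Fin d) (Fin d) ℝ) (hV : V.PosDef)
    (z : Fin d → ℝ) : lamMin V * (z ⬝ᵥ z) ≤ z ⬝ᵥ V *ᵥ z := by
  classical
  have hH : V.IsHermitian := hV.1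
  set lam := lamMin V with hlam
  have hlam' : lam = ⨅ i, hH.eigenvalues i := by rw [hlam, lamMin, dif_pos hH]
  set U : Matrix (Fin d) (Fin d) ℝ := (hH.eigenvectorUnitary : Matrix (Fin d) (Fin d) ℝ) with hU
  have hUu : U * star U = 1 :=
    (Matrix.mem_unitaryGroup_iff).mp hH.eigenvectorUnitary.2
  have hdecomp : V - lam • 1 = U * diagonal (fun i => hH.eigenvalues i - lam) * star U := by
    have hs := hH.spectral_theorem
    rw [Unitary.conjStarAlgAut_apply] at hs
    have hdiag : diagonal (fun i => hH.eigenvalues i - lam)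
        = diagonal (RCLike.ofReal ∘ hH.eigenvalues) - lam • (1 : Matrix (Fin d) (Fin d) ℝ) := by
      ext i j
      rcases eq_or_ne i j with rfl | h
      · simp [Matrix.one_apply, Function.comp]
      · simp [Matrix.diagonal_apply_ne _ h, Matrix.one_apply_ne h]
    rw [hdiag, Matrix.mul_sub, Matrix.sub_mul, ← hs]
    congr 1
    rw [Matrix.mul_smul, Matrix.smul_mul, mul_one, hUu]
  have hpsd : (V - lam • 1).PosSemidef := by
    rw [hdecomp]
    have := (Matrix.PosSemidef.diagonal (d := fun i => hH.eigenvalues i - lam)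
      (fun i => by
        simp only [Pi.zero_apply, sub_nonneg]
        rw [hlam']
        exact ciInf_le (Finite.bddBelow_range _) i)).mul_mul_conjTranspose_same U
    simpa [Matrix.star_eq_conjTranspose] using this
  have := hpsd.dotProduct_mulVec_nonneg z
  simp only [star_trivial, Matrix.sub_mulVec, Matrix.smul_mulVec, Matrix.one_mulVec,
    dotProduct_sub, dotProduct_smul, smul_eq_mul] at this
  linarith

theorem stmt2 {d : ℕ} (V : Matrix (Fin d) (Fin d) ℝ) (hV : V.PosDef)
    (θhat : Fin d → ℝ) (β : ℝ) (hβ : 0 ≤ β)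
    (B : Set (Fin d → ℝ)) (hB : B = {θ : Fin d → ℝ | wnorm V (θhat - θ) ≤ β})
    (α rb : ℝ) (φ ψ : Fin d → ℝ) (hφ : eucNorm φ ≤ 1)
    (h1 : ψ ⬝ᵥ θhat ≥ β / Real.sqrt (lamMin V) + (1 - α) * rb)
    (h2 : φ ⬝ᵥ θhat ≥ ψ ⬝ᵥ θhat) :
    ∀ v ∈ B, φ ⬝ᵥ v ≥ (1 - α) * rb := by
  intro v hv
  rw [hB] at hv
  set z : Fin d → ℝ := θhat - v with hz
  have hwz : Real.sqrt (z ⬝ᵥ V *ᵥ z) ≤ β := hv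
  have h0 : 0 ≤ z ⬝ᵥ V *ᵥ z := by
    have := hV.posSemidef.dotProduct_mulVec_nonneg z
    simpa using this
  have hzV : z ⬝ᵥ V *ᵥ z ≤ β ^ 2 := by
    have h' : Real.sqrt (z ⬝ᵥ V *ᵥ z) ^ 2 ≤ β ^ 2 :=
      pow_le_pow_left₀ (Real.sqrt_nonneg _) hwz 2
    rwa [Real.sq_sqrt h0] at h'
  have hzz : lamMin V * (z ⬝ᵥ z) ≤ β ^ 2 :=
    (lamMin_dotProduct_le V hV z).trans hzV
  have hle : eucNorm z ≤ β / Real.sqrt (lamMin V) := by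
    by_cases hd : Nonempty (Fin d)
    · have hlampos : 0 < lamMin V := by
        rw [lamMin, dif_pos hV.1]
        obtain ⟨i0, hi0⟩ := Finite.exists_min hV.1.eigenvalues
        exact lt_of_lt_of_le (hV.eigenvalues_pos i0) (le_ciInf hi0)
      have hzz' : z ⬝ᵥ z ≤ β ^ 2 / lamMin V := by
        rw [le_div_iff₀ hlampos]; linarith
      calc eucNorm z = Real.sqrt (z ⬝ᵥ z) := rfl
        _ ≤ Real.sqrt (β ^ 2 / lamMin V) := Real.sqrt_le_sqrt hzz'
        _ = β / Real.sqrt (lamMin V) := by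
            rw [Real.sqrt_div (sq_nonneg β), Real.sqrt_sq hβ]
    · have hempty : IsEmpty (Fin d) := not_nonempty_iff.mp hd
      have : z ⬝ᵥ z = 0 := by simp [dotProduct]
      rw [eucNorm, this, Real.sqrt_zero]
      positivity
  have hCS : φ ⬝ᵥ z ≤ eucNorm φ * eucNorm z := by
    have := Real.sum_mul_le_sqrt_mul_sqrt Finset.univ φ z
    simpa [dotProduct, eucNorm, pow_two] using this
  have h3 : φ ⬝ᵥ z ≤ β / Real.sqrt (lamMin V) := by
    have hεz : 0 ≤ eucNorm z := Real.sqrt_nonneg _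
    calc φ ⬝ᵥ z ≤ eucNorm φ * eucNorm z := hCS
      _ ≤ 1 * (β / Real.sqrt (lamMin V)) :=
          mul_le_mul hφ hle hεz zero_le_one
      _ = β / Real.sqrt (lamMin V) := one_mul _
  have hsplit : φ ⬝ᵥ z = φ ⬝ᵥ θhat - φ ⬝ᵥ v := by
    rw [hz, dotProduct_sub]
  linarith
end

section
/- Let V be a symmetric positive definite real d×d matrix, θ̂ ∈ ℝ^d, β ≥ 0, and B := {θ ∈ ℝ^d : ‖θ̂ − θ‖_V ≤ β}. Let α, r_b ∈ ℝ and let φ, ψ ∈ ℝ^d with ‖φ‖₂ ≤ 1. If ψᵀθ̂ ≤ −β/√(λ_min(V)) + (1 − α)·r_b and φᵀθ̂ ≤ ψᵀθ̂, then for every v ∈ B one has φᵀv ≤ (1 − α)·r_b. -/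
open Matrix

/-- Cauchy–Schwarz for dot products on ℝ^d. -/
lemma cs_dot {d : ℕ} (x y : Fin d → ℝ) : (x ⬝ᵥ y) ^ 2 ≤ (x ⬝ᵥ x) * (y ⬝ᵥ y) := by
  have h := real_inner_mul_inner_self_le (F := EuclideanSpace ℝ (Fin d)) (WithLp.toLp 2 x) (WithLp.toLp 2 y)
  simp only [PiLp.inner_apply] at h
  simpa [PiLp.inner_apply, RCLike.inner_apply, dotProduct, sq, mul_comm] using h

/-- Rayleigh-type lower bound: zᵀVz ≥ λmin · zᵀz. -/
lemma quad_lower {d : ℕ} (V : Matrix (Fin d) (Fin d) ℝ) (hV : V.PosDef)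
    (hd : 0 < d) (z : Fin d → ℝ) :
    lamMin V * (z ⬝ᵥ z) ≤ z ⬝ᵥ V.mulVec z := by
  classical
  have : Nonempty (Fin d) := Fin.pos_iff_nonempty.mp hd
  have hH : V.IsHermitian := hV.isHermitian
  have hlam : lamMin V = ⨅ i, hH.eigenvalues i := by
    rw [lamMin, dif_pos hH]
  set lam := lamMin V with hlamdef
  have hle : ∀ i, lam ≤ hH.eigenvalues i := fun i => by
    rw [hlam]; exact ciInf_le (Finite.bddBelow_range _) i
  -- V - lam • 1 is PSD
  set U : Matrix (Fin d) (Fin d) ℝ := (hH.eigenvectorUnitary : Matrix (Fin d) (Fin d) ℝ)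
  have hU : U * Uᴴ = 1 := Matrix.mem_unitaryGroup_iff.mp hH.eigenvectorUnitary.2
  have hspec : V = U * Matrix.diagonal ((RCLike.ofReal : ℝ → ℝ) ∘ hH.eigenvalues) * Uᴴ := by
    have := hH.spectral_theorem
    simpa [Matrix.star_eq_conjTranspose] using this
  have hdecomp : V - lam • 1 =
      U * (Matrix.diagonal (fun i => hH.eigenvalues i - lam)) * Uᴴ := by
    have h1 : Matrix.diagonal (fun i => hH.eigenvalues i - lam) =
        Matrix.diagonal ((RCLike.ofReal : ℝ → ℝ) ∘ hH.eigenvalues) - lam • 1 := by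
      ext i j
      by_cases hij : i = j <;>
        simp [Matrix.diagonal_apply, hij, Matrix.one_apply, Matrix.sub_apply, Matrix.smul_apply]
    rw [h1, Matrix.mul_sub, Matrix.sub_mul, ← hspec]
    congr 1
    rw [Matrix.mul_smul, Matrix.smul_mul, Matrix.mul_one, hU]
  have hPSD : (V - lam • 1).PosSemidef := by
    rw [hdecomp]
    exact (Matrix.PosSemidef.diagonal (fun i => sub_nonneg.mpr (hle i))).mul_mul_conjTranspose_same U
  have h := hPSD.dotProduct_mulVec_nonneg z
  have hstar : star z = z := by simp
  rw [hstar] at h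
  have hexp : z ⬝ᵥ (V - lam • 1).mulVec z = z ⬝ᵥ V.mulVec z - lam * (z ⬝ᵥ z) := by
    rw [Matrix.sub_mulVec, dotProduct_sub, Matrix.smul_mulVec,
      Matrix.one_mulVec, dotProduct_smul, smul_eq_mul]
  rw [hexp] at h
  linarith

theorem stmt3 {d : ℕ} (V : Matrix (Fin d) (Fin d) ℝ) (hV : V.PosDef)
    (θhat : Fin d → ℝ) (β : ℝ) (hβ : 0 ≤ β)
    (B : Set (Fin d → ℝ)) (hB : B = {θ : Fin d → ℝ | wnorm V (θhat - θ) ≤ β})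
    (α rb : ℝ) (φ ψ : Fin d → ℝ) (hφ : eucNorm φ ≤ 1)
    (h1 : ψ ⬝ᵥ θhat ≤ -(β / Real.sqrt (lamMin V)) + (1 - α) * rb)
    (h2 : φ ⬝ᵥ θhat ≤ ψ ⬝ᵥ θhat) :
    ∀ v ∈ B, φ ⬝ᵥ v ≤ (1 - α) * rb := by
  intro v hv
  have hdiv : 0 ≤ β / Real.sqrt (lamMin V) := div_nonneg hβ (Real.sqrt_nonneg _)
  rcases Nat.eq_zero_or_pos d with hd | hd
  · subst hd
    have h0 : φ ⬝ᵥ v = 0 := by simp [dotProduct]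
    have h0' : ψ ⬝ᵥ θhat = 0 := by simp [dotProduct]
    rw [h0]
    rw [h0'] at h1
    linarith
  -- main case
  have hH : V.IsHermitian := hV.isHermitian
  have : Nonempty (Fin d) := Fin.pos_iff_nonempty.mp hd
  set lam := lamMin V with hlamdef
  have hlampos : 0 < lam := by
    obtain ⟨i, hi⟩ := exists_eq_ciInf_of_finite (f := hH.eigenvalues)
    have := hV.eigenvalues_pos (i := i)
    rw [hlamdef, lamMin, dif_pos hH, ← hi]
    exact this
  set z : Fin d → ℝ := θhat - v with hz
  have hvB : Real.sqrt (z ⬝ᵥ V.mulVec z) ≤ β := by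
    rw [hB] at hv; exact hv
  have hzVz_nonneg : 0 ≤ z ⬝ᵥ V.mulVec z := by
    rcases eq_or_ne z 0 with h | h
    · simp [h]
    · exact le_of_lt (by simpa using hV.dotProduct_mulVec_pos h)
  have hzVz : z ⬝ᵥ V.mulVec z ≤ β ^ 2 := by
    have := Real.sq_sqrt hzVz_nonneg
    nlinarith [Real.sqrt_nonneg (z ⬝ᵥ V.mulVec z)]
  have hquad := quad_lower V hV hd z
  have hzz_nonneg : 0 ≤ z ⬝ᵥ z :=
    Finset.sum_nonneg fun i _ => mul_self_nonneg (z i)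
  have hzz : z ⬝ᵥ z ≤ (β / Real.sqrt lam) ^ 2 := by
    have hsq : Real.sqrt lam ^ 2 = lam := Real.sq_sqrt hlampos.le
    rw [div_pow, hsq]
    rw [le_div_iff₀ hlampos]
    nlinarith
  -- |φ ⬝ᵥ z| ≤ β / √lam
  have hφφ : φ ⬝ᵥ φ ≤ 1 := by
    have h1' : Real.sqrt (φ ⬝ᵥ φ) ≤ 1 := hφ
    have h2' : 0 ≤ φ ⬝ᵥ φ :=
      Finset.sum_nonneg fun i _ => mul_self_nonneg (φ i)
    nlinarith [Real.sq_sqrt h2', Real.sqrt_nonneg (φ ⬝ᵥ φ)]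
  have hcs := cs_dot φ z
  have hbound : -(β / Real.sqrt lam) ≤ φ ⬝ᵥ z := by
    nlinarith [sq_nonneg (φ ⬝ᵥ z + β / Real.sqrt lam), div_nonneg hβ (Real.sqrt_nonneg lam)]
  have hsplit : φ ⬝ᵥ v = φ ⬝ᵥ θhat - φ ⬝ᵥ z := by
    rw [hz]; rw [dotProduct_sub]; ring
  rw [hsplit]
  have h1' : ψ ⬝ᵥ θhat ≤ -(β / Real.sqrt lam) + (1 - α) * rb := h1
  linarith
end

section
/- Let V be a symmetric positive definite real d×d matrix, θ̂ ∈ ℝ^d, β ≥ 0, and B := {θ ∈ ℝ^d : ‖θ̂ − θ‖_V ≤ β}. Let α ∈ (0,1], r_b > 0, and suppose θ* ∈ B, ψ*, ψ̄ ∈ ℝ^d with ‖ψ̄‖₂ ≤ 1, (ψ*)ᵀθ* ≥ r_b, ψ̄ᵀθ* < (1 − α)·r_b, and λ_min(V) ≥ (2β/(α r_b))². Then sup_{θ ∈ B} (ψ*)ᵀθ > sup_{θ ∈ B} ψ̄ᵀθ; i.e., an action whose expected feature vector violates the performance constraint is never the maximizer over the confidence set. -/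
open Matrix

theorem rayleigh_low' {d : ℕ} {V : Matrix (Fin d) (Fin d) ℝ} (hV : V.IsHermitian)
    (z : Fin d → ℝ) : lamMin V * (z ⬝ᵥ z) ≤ z ⬝ᵥ V.mulVec z := by
  classical
  rw [lamMin, dif_pos hV]
  set U : Matrix (Fin d) (Fin d) ℝ := (hV.eigenvectorUnitary : Matrix (Fin d) (Fin d) ℝ) with hU
  set w : Fin d → ℝ := star U *ᵥ z with hw
  have hzU : z ᵥ* U = w := by
    rw [hw, Matrix.star_eq_conjTranspose, conjTranspose_eq_transpose_of_trivial,
      mulVec_transpose]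
  have hVz : z ⬝ᵥ V.mulVec z = ∑ i, hV.eigenvalues i * w i ^ 2 := by
    conv_lhs => rw [hV.spectral_theorem, Unitary.conjStarAlgAut_apply]
    rw [← mulVec_mulVec, ← mulVec_mulVec, dotProduct_mulVec, hzU]
    simp only [dotProduct, mulVec_diagonal, Function.comp, RCLike.ofReal_real_eq_id, id]
    exact Finset.sum_congr rfl fun i _ => by ring
  have hzz : z ⬝ᵥ z = ∑ i, w i ^ 2 := by
    have hww : (z ᵥ* U) ⬝ᵥ (star U *ᵥ z) = z ⬝ᵥ z := by
      rw [← dotProduct_mulVec, mulVec_mulVec,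
        (Matrix.mem_unitaryGroup_iff).mp hV.eigenvectorUnitary.2, one_mulVec]
    rw [← hww, hzU, ← hw]
    simp [dotProduct, pow_two]
  rw [hVz, hzz, Finset.mul_sum]
  refine Finset.sum_le_sum fun i _ => ?_
  have hne : Nonempty (Fin d) := ⟨i⟩
  have h := ciInf_le (Set.Finite.bddBelow (Set.finite_range hV.eigenvalues)) i
  nlinarith [sq_nonneg (w i), h]

theorem wnorm_add_le' {d : ℕ} {V : Matrix (Fin d) (Fin d) ℝ} (hV : V.PosDef)
    (x y : Fin d → ℝ) : wnorm V (x + y) ≤ wnorm V x + wnorm V y := by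
  have hsym : ∀ u v : Fin d → ℝ, u ⬝ᵥ V.mulVec v = v ⬝ᵥ V.mulVec u := by
    intro u v
    have hVt : Vᵀ = V := by
      rw [← conjTranspose_eq_transpose_of_trivial, hV.isHermitian.eq]
    rw [dotProduct_mulVec, ← mulVec_transpose, hVt, dotProduct_comm]
  have hnn : ∀ u : Fin d → ℝ, 0 ≤ u ⬝ᵥ V.mulVec u := by
    intro u
    simpa using hV.posSemidef.re_dotProduct_nonneg u
  set a := x ⬝ᵥ V.mulVec x with ha
  set b := y ⬝ᵥ V.mulVec y with hb
  set c := x ⬝ᵥ V.mulVec y with hc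
  have hexp : ∀ t : ℝ, 0 ≤ a + 2 * t * c + t ^ 2 * b := by
    intro t
    have h0 := hnn (x + t • y)
    have hE : (x + t • y) ⬝ᵥ V.mulVec (x + t • y) = a + 2 * t * c + t ^ 2 * b := by
      simp only [mulVec_add, mulVec_smul, add_dotProduct, dotProduct_add, dotProduct_smul,
        smul_dotProduct, smul_eq_mul]
      rw [hsym y x]
      rw [ha, hb, hc]
      ring
    rw [hE] at h0
    exact h0
  have hcs : c ^ 2 ≤ a * b := by
    rcases eq_or_lt_of_le (show (0:ℝ) ≤ b from hnn y) with hb0 | hb0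
    · have hm : ∀ t : ℝ, 0 ≤ a + 2 * t * c := by
        intro t
        have h := hexp t
        rw [← hb0] at h
        linarith
      have hc0 : c = 0 := by
        by_contra hne
        have h := hm ((-a - 1) / (2 * c))
        have hval : a + 2 * ((-a - 1) / (2 * c)) * c = -1 := by
          field_simp
          ring
        linarith
      rw [hc0, ← hb0]
      nlinarith [hnn x]
    · have h := hexp (-(c / b))
      have hb' : b ≠ 0 := ne_of_gt hb0
      have hval : a + 2 * (-(c / b)) * c + (-(c / b)) ^ 2 * b = a - c ^ 2 / b := by
        field_simp
        ring
      rw [hval] at h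
      have h2 : c ^ 2 / b ≤ a := by linarith
      calc c ^ 2 = c ^ 2 / b * b := by field_simp
        _ ≤ a * b := mul_le_mul_of_nonneg_right h2 hb0.le
  have hab : c ≤ Real.sqrt a * Real.sqrt b := by
    calc c ≤ |c| := le_abs_self c
      _ = Real.sqrt (c ^ 2) := (Real.sqrt_sq_eq_abs c).symm
      _ ≤ Real.sqrt (a * b) := Real.sqrt_le_sqrt hcs
      _ = Real.sqrt a * Real.sqrt b := Real.sqrt_mul (hnn x) b
  have hsum : (x + y) ⬝ᵥ V.mulVec (x + y) = a + 2 * c + b := by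
    simp only [mulVec_add, add_dotProduct, dotProduct_add]
    rw [hsym y x]
    rw [ha, hb, hc]
    ring
  rw [wnorm, wnorm, wnorm, hsum, ← ha, ← hb]
  have h2 : a + 2 * c + b ≤ (Real.sqrt a + Real.sqrt b) ^ 2 := by
    have hsa := Real.sq_sqrt (hnn x)
    have hsb := Real.sq_sqrt (hnn y)
    rw [← ha] at hsa
    rw [← hb] at hsb
    nlinarith [hab]
  calc Real.sqrt (a + 2 * c + b) ≤ Real.sqrt ((Real.sqrt a + Real.sqrt b) ^ 2) :=
        Real.sqrt_le_sqrt h2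
    _ = Real.sqrt a + Real.sqrt b := Real.sqrt_sq (by positivity)

theorem dot_le_eucNorm {d : ℕ} (x y : Fin d → ℝ) : x ⬝ᵥ y ≤ eucNorm x * eucNorm y := by
  have h := Finset.sum_mul_sq_le_sq_mul_sq Finset.univ x y
  have hx : (0:ℝ) ≤ x ⬝ᵥ x := Finset.sum_nonneg fun i _ => mul_self_nonneg _
  calc x ⬝ᵥ y ≤ Real.sqrt ((x ⬝ᵥ y) ^ 2) := by
        rw [Real.sqrt_sq_eq_abs]; exact le_abs_self _
    _ ≤ Real.sqrt ((x ⬝ᵥ x) * (y ⬝ᵥ y)) := Real.sqrt_le_sqrt (by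
        simpa [dotProduct, pow_two] using h)
    _ = eucNorm x * eucNorm y := by rw [eucNorm, eucNorm, Real.sqrt_mul hx]

theorem stmt4 {d : ℕ} (V : Matrix (Fin d) (Fin d) ℝ) (hV : V.PosDef)
    (θhat : Fin d → ℝ) (β : ℝ) (hβ : 0 ≤ β)
    (B : Set (Fin d → ℝ)) (hB : B = {θ : Fin d → ℝ | wnorm V (θhat - θ) ≤ β})
    (α rb : ℝ) (hα0 : 0 < α) (hα1 : α ≤ 1) (hrb : 0 < rb)
    (θstar ψstar ψbar : Fin d → ℝ) (hθB : θstar ∈ B)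
    (hψbar : eucNorm ψbar ≤ 1)
    (h1 : ψstar ⬝ᵥ θstar ≥ rb)
    (h2 : ψbar ⬝ᵥ θstar < (1 - α) * rb)
    (hlmin : lamMin V ≥ (2 * β / (α * rb)) ^ 2) :
    (⨆ θ : B, ψstar ⬝ᵥ (θ : Fin d → ℝ)) > ⨆ θ : B, ψbar ⬝ᵥ (θ : Fin d → ℝ) := by
  classical
  rcases Nat.eq_zero_or_pos d with hd | hd
  · exfalso
    subst hd
    simp [dotProduct] at h1
    linarith
  haveI : Nonempty (Fin d) := ⟨⟨0, hd⟩⟩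
  have hαrb : 0 < α * rb := mul_pos hα0 hrb
  -- positivity of lamMin
  have hlam_pos : 0 < lamMin V := by
    rw [lamMin, dif_pos hV.isHermitian]
    obtain ⟨i, hi⟩ := exists_eq_ciInf_of_finite (f := hV.isHermitian.eigenvalues)
    rw [← hi]
    exact hV.eigenvalues_pos i
  set s := Real.sqrt (lamMin V) with hs
  have hs_pos : 0 < s := Real.sqrt_pos.mpr hlam_pos
  have hs_ge : 2 * β / (α * rb) ≤ s := by
    have := Real.sqrt_le_sqrt hlmin
    rwa [Real.sqrt_sq (by positivity)] at this
  have hs2β : 2 * β ≤ s * (α * rb) := by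
    rw [div_le_iff₀ hαrb] at hs_ge
    linarith
  -- distance bound for θ ∈ B
  have key : ∀ θ ∈ B, eucNorm (θ - θstar) ≤ α * rb := by
    intro θ hθ
    rw [hB] at hθ hθB
    have hw2β : wnorm V (θ - θstar) ≤ 2 * β := by
      have heq : θ - θstar = (θhat - θstar) + (-(θhat - θ)) := by abel
      have hneg : wnorm V (-(θhat - θ)) = wnorm V (θhat - θ) := by
        rw [wnorm, wnorm, mulVec_neg, dotProduct_neg, neg_dotProduct, neg_neg]
      calc wnorm V (θ - θstar) = wnorm V ((θhat - θstar) + (-(θhat - θ))) := by rw [← heq]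
        _ ≤ wnorm V (θhat - θstar) + wnorm V (-(θhat - θ)) := wnorm_add_le' hV _ _
        _ ≤ β + β := by rw [hneg]; exact add_le_add hθB hθ
        _ = 2 * β := by ring
    set z := θ - θstar
    have hzz : (0:ℝ) ≤ z ⬝ᵥ z := Finset.sum_nonneg fun i _ => mul_self_nonneg _
    have hray := rayleigh_low' hV.isHermitian z
    have hse : s * eucNorm z ≤ wnorm V z := by
      rw [hs, eucNorm, wnorm, ← Real.sqrt_mul hlam_pos.le]
      exact Real.sqrt_le_sqrt hray
    have he_nonneg : 0 ≤ eucNorm z := Real.sqrt_nonneg _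
    have : s * eucNorm z ≤ s * (α * rb) := by linarith
    exact le_of_mul_le_mul_left this hs_pos
  -- bound for arbitrary ψ
  have bound : ∀ (ψ : Fin d → ℝ), ∀ θ ∈ B,
      ψ ⬝ᵥ θ ≤ ψ ⬝ᵥ θstar + eucNorm ψ * (α * rb) := by
    intro ψ θ hθ
    have h3 : ψ ⬝ᵥ (θ - θstar) ≤ eucNorm ψ * eucNorm (θ - θstar) := dot_le_eucNorm _ _
    have h4 : eucNorm ψ * eucNorm (θ - θstar) ≤ eucNorm ψ * (α * rb) :=
      mul_le_mul_of_nonneg_left (key θ hθ) (Real.sqrt_nonneg _)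
    have h5 : ψ ⬝ᵥ (θ - θstar) = ψ ⬝ᵥ θ - ψ ⬝ᵥ θstar := dotProduct_sub _ _ _
    linarith
  haveI hBne : Nonempty B := ⟨⟨θstar, hθB⟩⟩
  -- upper bound on sup ψbar
  have hub : (⨆ θ : B, ψbar ⬝ᵥ (θ : Fin d → ℝ)) < rb := by
    have := ciSup_le (f := fun θ : B => ψbar ⬝ᵥ (θ : Fin d → ℝ))
      (fun θ => by
        have hb := bound ψbar θ θ.2
        have : eucNorm ψbar * (α * rb) ≤ 1 * (α * rb) :=
          mul_le_mul_of_nonneg_right hψbar hαrb.le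
        calc ψbar ⬝ᵥ (θ : Fin d → ℝ) ≤ ψbar ⬝ᵥ θstar + eucNorm ψbar * (α * rb) := hb
          _ ≤ ψbar ⬝ᵥ θstar + α * rb := by linarith)
    calc (⨆ θ : B, ψbar ⬝ᵥ (θ : Fin d → ℝ)) ≤ ψbar ⬝ᵥ θstar + α * rb := this
      _ < (1 - α) * rb + α * rb := by linarith
      _ = rb := by ring
  -- lower bound on sup ψstar
  have hlb : rb ≤ ⨆ θ : B, ψstar ⬝ᵥ (θ : Fin d → ℝ) := by
    have hbdd : BddAbove (Set.range fun θ : B => ψstar ⬝ᵥ (θ : Fin d → ℝ)) := by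
      refine ⟨ψstar ⬝ᵥ θstar + eucNorm ψstar * (α * rb), ?_⟩
      rintro _ ⟨θ, rfl⟩
      exact bound ψstar θ θ.2
    have := le_ciSup hbdd (⟨θstar, hθB⟩ : B)
    calc rb ≤ ψstar ⬝ᵥ θstar := h1
      _ ≤ _ := this
  exact lt_of_lt_of_le hub hlb
end

section
/- Let α ∈ [0,1], 0 < r_l ≤ r_b ≤ r_h, and let φ_b, ζ, θ* ∈ ℝ^d satisfy φ_bᵀθ* = r_b, ‖ζ‖₂ = 1 and ‖θ*‖₂ ≤ 1. Then for every ρ with 0 < ρ ≤ α·r_l/(1 + r_h), the conservative feature vector (1 − ρ)·φ_b + ρ·ζ satisfies ((1 − ρ)·φ_b + ρ·ζ)ᵀθ* ≥ (1 − α)·r_b. -/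
open Matrix

theorem stmt5 {d : ℕ} (α rl rb rh : ℝ) (hα0 : 0 ≤ α) (hα1 : α ≤ 1)
    (hrl : 0 < rl) (hlb : rl ≤ rb) (hub : rb ≤ rh)
    (φb ζ θstar : Fin d → ℝ)
    (hb : φb ⬝ᵥ θstar = rb) (hζ : eucNorm ζ = 1) (hθ : eucNorm θstar ≤ 1)
    (ρ : ℝ) (hρ0 : 0 < ρ) (hρ : ρ ≤ α * rl / (1 + rh)) :
    ((1 - ρ) • φb + ρ • ζ) ⬝ᵥ θstar ≥ (1 - α) * rb := by
  have hζζ0 : (0:ℝ) ≤ ζ ⬝ᵥ ζ := Finset.sum_nonneg fun i _ => mul_self_nonneg _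
  have hθθ0 : (0:ℝ) ≤ θstar ⬝ᵥ θstar := Finset.sum_nonneg fun i _ => mul_self_nonneg _
  have hζζ : ζ ⬝ᵥ ζ = 1 := by
    have := Real.sq_sqrt hζζ0
    rw [eucNorm] at hζ
    nlinarith [Real.sqrt_nonneg (ζ ⬝ᵥ ζ)]
  have hθθ : θstar ⬝ᵥ θstar ≤ 1 := by
    rw [eucNorm] at hθ
    nlinarith [Real.sq_sqrt hθθ0, Real.sqrt_nonneg (θstar ⬝ᵥ θstar)]
  have hcs : (ζ ⬝ᵥ θstar) ^ 2 ≤ (ζ ⬝ᵥ ζ) * (θstar ⬝ᵥ θstar) := by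
    simpa [dotProduct, sq] using
      Finset.sum_mul_sq_le_sq_mul_sq Finset.univ ζ θstar
  have ht : ζ ⬝ᵥ θstar ≥ -1 := by nlinarith
  have hrh : (0:ℝ) < 1 + rh := by linarith
  have hρ' : ρ * (1 + rh) ≤ α * rl := by
    exact (le_div_iff₀ hrh).mp hρ
  rw [add_dotProduct, smul_dotProduct, smul_dotProduct, hb, smul_eq_mul, smul_eq_mul]
  nlinarith
end

section
/- Let V be a symmetric positive definite real d×d matrix, θ̂ ∈ ℝ^d, β ≥ 0, and B := {θ ∈ ℝ^d : ‖θ̂ − θ‖_V ≤ β}. Let α ∈ (0,1], r_b > 0, and suppose θ* ∈ B, ψ* ∈ ℝ^d with ‖ψ*‖₂ ≤ 1, (ψ*)ᵀθ* ≥ r_b, and λ_min(V) ≥ (2β/(α r_b))². Then (ψ*)ᵀθ̂ ≥ β/√(λ_min(V)) + (1 − α)·r_b; i.e., the optimal action's expected feature vector passes the pruned-action-set test. -/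
open Matrix

lemma rayleigh_aux {d : ℕ} (V : Matrix (Fin d) (Fin d) ℝ) (hH : V.IsHermitian) (z : Fin d → ℝ) :
    lamMin V * (z ⬝ᵥ z) ≤ z ⬝ᵥ V.mulVec z := by
  classical
  rcases Nat.eq_zero_or_pos d with hd | hd
  · subst hd; simp [dotProduct, lamMin]
  · have hne : Nonempty (Fin d) := ⟨⟨0, hd⟩⟩
    set U : Matrix (Fin d) (Fin d) ℝ := (hH.eigenvectorUnitary : Matrix (Fin d) (Fin d) ℝ) with hU
    set w : Fin d → ℝ := z ᵥ* U with hw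
    have hUU : U * star U = 1 := (Matrix.mem_unitaryGroup_iff).mp hH.eigenvectorUnitary.2
    have hstar : star U *ᵥ z = w := by
      rw [hw, ← Matrix.mulVec_transpose]
      congr 1
    have key1 : z ⬝ᵥ V.mulVec z = ∑ i, hH.eigenvalues i * (w i)^2 := by
      conv_lhs => rw [hH.spectral_theorem, Unitary.conjStarAlgAut_apply]
      rw [← Matrix.mulVec_mulVec, ← Matrix.mulVec_mulVec, hstar,
        Matrix.dotProduct_mulVec, ← hw]
      simp [dotProduct, Matrix.mulVec_diagonal, sq, mul_comm, mul_assoc, mul_left_comm]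
    have key2 : z ⬝ᵥ z = ∑ i, (w i)^2 := by
      have h2 : w ⬝ᵥ w = z ⬝ᵥ z := by
        calc w ⬝ᵥ w = w ⬝ᵥ (star U *ᵥ z) := by rw [hstar]
        _ = (w ᵥ* star U) ⬝ᵥ z := by rw [Matrix.dotProduct_mulVec]
        _ = (z ᵥ* (U * star U)) ⬝ᵥ z := by rw [hw, Matrix.vecMul_vecMul]
        _ = z ⬝ᵥ z := by rw [hUU, Matrix.vecMul_one]
      rw [← h2]; simp [dotProduct, sq]
    rw [key1, key2, lamMin, dif_pos hH, Finset.mul_sum]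
    apply Finset.sum_le_sum
    intro i _
    have h1 : (⨅ j, hH.eigenvalues j) ≤ hH.eigenvalues i := ciInf_le (Finite.bddBelow_range _) i
    nlinarith [sq_nonneg (w i)]

theorem stmt6 {d : ℕ} (V : Matrix (Fin d) (Fin d) ℝ) (hV : V.PosDef)
    (θhat : Fin d → ℝ) (β : ℝ) (hβ : 0 ≤ β)
    (B : Set (Fin d → ℝ)) (hB : B = {θ : Fin d → ℝ | wnorm V (θhat - θ) ≤ β})
    (α rb : ℝ) (hα0 : 0 < α) (hα1 : α ≤ 1) (hrb : 0 < rb)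
    (θstar ψstar : Fin d → ℝ) (hθB : θstar ∈ B)
    (hψstar : eucNorm ψstar ≤ 1)
    (h1 : ψstar ⬝ᵥ θstar ≥ rb)
    (hlmin : lamMin V ≥ (2 * β / (α * rb)) ^ 2) :
    ψstar ⬝ᵥ θhat ≥ β / Real.sqrt (lamMin V) + (1 - α) * rb := by
  classical
  rcases Nat.eq_zero_or_pos d with hd | hd
  · exfalso
    subst hd
    simp [dotProduct] at h1
    linarith
  have hne : Nonempty (Fin d) := ⟨⟨0, hd⟩⟩
  have hH : V.IsHermitian := hV.1
  set c := lamMin V with hc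
  have hcpos : 0 < c := by
    rw [hc, lamMin, dif_pos hH]
    obtain ⟨i, hi⟩ := exists_eq_ciInf_of_finite (f := hH.eigenvalues)
    rw [← hi]
    exact hV.eigenvalues_pos i
  have hsc : 0 < Real.sqrt c := Real.sqrt_pos.2 hcpos
  set v : Fin d → ℝ := θhat - θstar with hv
  -- bound v ⬝ V v ≤ β²
  have hwn : wnorm V v ≤ β := by rw [hB] at hθB; exact hθB
  have hVv0 : 0 ≤ v ⬝ᵥ V.mulVec v := by
    have := hV.posSemidef.dotProduct_mulVec_nonneg v
    simpa using this
  have hVv : v ⬝ᵥ V.mulVec v ≤ β ^ 2 := by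
    have h2 : Real.sqrt (v ⬝ᵥ V.mulVec v) ≤ β := hwn
    calc v ⬝ᵥ V.mulVec v = Real.sqrt (v ⬝ᵥ V.mulVec v) ^ 2 := (Real.sq_sqrt hVv0).symm
    _ ≤ β ^ 2 := pow_le_pow_left₀ (Real.sqrt_nonneg _) h2 2
  have hray := rayleigh_aux V hH v
  have hvv : v ⬝ᵥ v ≤ β ^ 2 / c := by
    rw [le_div_iff₀ hcpos]; nlinarith
  -- Cauchy–Schwarz
  have hcs : (ψstar ⬝ᵥ v) ^ 2 ≤ (ψstar ⬝ᵥ ψstar) * (v ⬝ᵥ v) := by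
    simpa [dotProduct, sq] using
      Finset.sum_mul_sq_le_sq_mul_sq Finset.univ ψstar v
  have hψψ0 : 0 ≤ ψstar ⬝ᵥ ψstar :=
    Finset.sum_nonneg fun i _ => mul_self_nonneg _
  have hψψ : ψstar ⬝ᵥ ψstar ≤ 1 := by
    have := Real.sq_sqrt hψψ0
    have h2 : Real.sqrt (ψstar ⬝ᵥ ψstar) ≤ 1 := hψstar
    nlinarith [Real.sqrt_nonneg (ψstar ⬝ᵥ ψstar)]
  have hvv0 : 0 ≤ v ⬝ᵥ v := Finset.sum_nonneg fun i _ => mul_self_nonneg _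
  have hcs2 : (ψstar ⬝ᵥ v) ^ 2 ≤ β ^ 2 / c := by
    calc (ψstar ⬝ᵥ v) ^ 2 ≤ (ψstar ⬝ᵥ ψstar) * (v ⬝ᵥ v) := hcs
    _ ≤ 1 * (β ^ 2 / c) := by
        apply mul_le_mul hψψ hvv hvv0 zero_le_one
    _ = β ^ 2 / c := one_mul _
  -- hence |ψ ⬝ v| ≤ β / √c
  have hβc : (β / Real.sqrt c) ^ 2 = β ^ 2 / c := by
    rw [div_pow, Real.sq_sqrt hcpos.le]
  have habs : -(β / Real.sqrt c) ≤ ψstar ⬝ᵥ v := by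
    nlinarith [sq_nonneg (ψstar ⬝ᵥ v + β / Real.sqrt c), div_nonneg hβ hsc.le]
  -- √c ≥ 2β/(α rb)
  have hsqc : 2 * β / (α * rb) ≤ Real.sqrt c := by
    have h0 : 0 ≤ 2 * β / (α * rb) := by positivity
    nlinarith [Real.sq_sqrt hcpos.le, Real.sqrt_nonneg c]
  have hfin : 2 * (β / Real.sqrt c) ≤ α * rb := by
    rw [div_le_iff₀ (by positivity)] at hsqc
    have heq : 2 * (β / Real.sqrt c) = (2 * β) / Real.sqrt c := by ring
    rw [heq, div_le_iff₀ hsc]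
    nlinarith
  have hdot : ψstar ⬝ᵥ v = ψstar ⬝ᵥ θhat - ψstar ⬝ᵥ θstar := by
    rw [hv, dotProduct_sub]
  rw [hdot] at habs
  rw [ge_iff_le, hc]
  linarith
end

section
/- Let M ≥ 1 be an integer, ρ ∈ (0,1), d ≥ 1 an integer, δ ∈ (0,1), and set L := log(d/δ) > 0. Let σ ≥ 0, λ > 0, α ∈ (0,1], r_l > 0, T ≥ 0, and define β₀ := σ·√(2·log(1/δ)) + √λ and C := (2β₀/(α r_l))² − (λ + M·T); assume C ≥ 0. If N ≥ 0 satisfies 2Mρ(1 − ρ)·N + C ≤ √(32·M·ρ²(1 − ρ)²·N·L), then N ≥ (4/M)·L − C/(2Mρ(1 − ρ)) − √((16/M²)·L² − 4·C·L/(M²ρ(1 − ρ))) and N ≤ √((96/M²)·L² − 16·C·L/(M²ρ(1 − ρ))). -/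
set_option maxHeartbeats 1000000


theorem stmt12 (M d : ℕ) (hM : 1 ≤ M) (hd : 1 ≤ d)
    (ρ δ σ lam α rl T : ℝ)
    (hρ0 : 0 < ρ) (hρ1 : ρ < 1) (hδ0 : 0 < δ) (hδ1 : δ < 1)
    (hσ : 0 ≤ σ) (hlam : 0 < lam) (hα0 : 0 < α) (hα1 : α ≤ 1)
    (hrl : 0 < rl) (hT : 0 ≤ T)
    (L β₀ C : ℝ)
    (hL : L = Real.log (d / δ)) (hL0 : 0 < L)
    (hβ₀ : β₀ = σ * Real.sqrt (2 * Real.log (1 / δ)) + Real.sqrt lam)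
    (hC : C = (2 * β₀ / (α * rl)) ^ 2 - (lam + M * T))
    (hC0 : 0 ≤ C)
    (N : ℝ) (hN : 0 ≤ N)
    (h : 2 * M * ρ * (1 - ρ) * N + C ≤
      Real.sqrt (32 * M * ρ ^ 2 * (1 - ρ) ^ 2 * N * L)) :
    (4 / M) * L - C / (2 * M * ρ * (1 - ρ)) -
        Real.sqrt ((16 / M ^ 2) * L ^ 2 - 4 * C * L / (M ^ 2 * ρ * (1 - ρ))) ≤ N ∧
      N ≤ Real.sqrt ((96 / M ^ 2) * L ^ 2 - 16 * C * L / (M ^ 2 * ρ * (1 - ρ))) := by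
  have hMpos : (0:ℝ) < M := by exact_mod_cast Nat.lt_of_lt_of_le Nat.zero_lt_one hM
  have hρ1' : 0 < 1 - ρ := by linarith
  set a : ℝ := 2 * M * ρ * (1 - ρ) with ha_def
  have ha : 0 < a := by positivity
  set c : ℝ := C / a with hc_def
  set u : ℝ := 4 * L / M with hu_def
  have hc0 : 0 ≤ c := div_nonneg hC0 ha.le
  have hu0 : 0 < u := by positivity
  have hCeq : C = a * c := by rw [hc_def, mul_div_assoc', eq_div_iff ha.ne', mul_comm]
  -- square the hypothesis
  have hX : 0 ≤ 32 * M * ρ ^ 2 * (1 - ρ) ^ 2 * N * L := by positivity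
  have hLnn : 0 ≤ a * N + C := by positivity
  have hsq : (a * N + C) ^ 2 ≤ 32 * M * ρ ^ 2 * (1 - ρ) ^ 2 * N * L := by
    have := pow_le_pow_left₀ hLnn h 2
    rwa [Real.sq_sqrt hX] at this
  -- key quadratic inequality
  have hQ : (N + c) ^ 2 ≤ 2 * u * N := by
    have ha2 : 0 < a ^ 2 := by positivity
    have key : a ^ 2 * ((N + c) ^ 2) ≤ a ^ 2 * (2 * u * N) := by
      have h1 : a ^ 2 * ((N + c) ^ 2) = (a * N + C) ^ 2 := by
        rw [hCeq]; ring
      have h2 : a ^ 2 * (2 * u * N) = 32 * M * ρ ^ 2 * (1 - ρ) ^ 2 * N * L := by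
        rw [ha_def, hu_def]; field_simp; ring
      rw [h1, h2]; exact hsq
    exact le_of_mul_le_mul_left key ha2
  have hdist : (N - (u - c)) ^ 2 ≤ u ^ 2 - 2 * u * c := by nlinarith [hQ]
  have hD0 : 0 ≤ u ^ 2 - 2 * u * c := le_trans (sq_nonneg _) hdist
  have hc2 : c ≤ u / 2 := by nlinarith [hD0, hu0]
  have hsd : Real.sqrt ((N - (u - c)) ^ 2) ≤ Real.sqrt (u ^ 2 - 2 * u * c) :=
    Real.sqrt_le_sqrt hdist
  rw [Real.sqrt_sq_eq_abs] at hsd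
  have habs1 : u - c - N ≤ Real.sqrt (u ^ 2 - 2 * u * c) := by
    calc u - c - N ≤ |N - (u - c)| := by rw [abs_sub_comm]; exact le_abs_self _
    _ ≤ _ := hsd
  have habs2 : N - (u - c) ≤ Real.sqrt (u ^ 2 - 2 * u * c) :=
    le_trans (le_abs_self _) hsd
  -- rewrite the goal's sqrt arguments
  have e1 : (16 / (M:ℝ) ^ 2) * L ^ 2 - 4 * C * L / (M ^ 2 * ρ * (1 - ρ))
      = u ^ 2 - 2 * u * c := by
    rw [hu_def, hc_def, ha_def]; field_simp; ring
  have e2 : (96 / (M:ℝ) ^ 2) * L ^ 2 - 16 * C * L / (M ^ 2 * ρ * (1 - ρ))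
      = 6 * u ^ 2 - 8 * u * c := by
    rw [hu_def, hc_def, ha_def]; field_simp; ring
  have e3 : (4 / (M:ℝ)) * L = u := by rw [hu_def]; ring
  have e4 : C / (2 * M * ρ * (1 - ρ)) = c := rfl
  constructor
  · rw [e1]; linarith
  · rw [e2]
    have hDle : Real.sqrt (u ^ 2 - 2 * u * c) ≤ u - c := by
      rw [show u ^ 2 - 2 * u * c = (u - c)^2 - c^2 by ring]
      calc Real.sqrt ((u - c) ^ 2 - c ^ 2) ≤ Real.sqrt ((u - c) ^ 2) :=
            Real.sqrt_le_sqrt (by nlinarith)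
        _ = |u - c| := Real.sqrt_sq_eq_abs _
        _ = u - c := abs_of_nonneg (by linarith)
    have hNle : N ≤ 2 * (u - c) := by linarith
    exact Real.le_sqrt_of_sq_le (by nlinarith)
end

section
/- Let V be a symmetric positive definite real d×d matrix, θ̂ ∈ ℝ^d, β ≥ 0, and B := {θ ∈ ℝ^d : ‖θ̂ − θ‖_V ≤ β}. Let α ∈ (0,1] and 0 < r_l ≤ r_b, and suppose θ* ∈ B, ψ*, ψ_b ∈ ℝ^d with ‖ψ*‖₂ ≤ 1, ‖ψ_b‖₂ ≤ 1, ψ_bᵀθ* = r_b, (ψ*)ᵀθ* ≥ r_b, and λ_min(V) ≥ (2(2 − α)β/(α r_l))². Then (ψ*)ᵀθ̂ ≥ β/√(λ_min(V)) + (1 − α)·sup_{v ∈ B} ψ_bᵀ v. -/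
open Matrix

theorem quadLB {d : ℕ} (V : Matrix (Fin d) (Fin d) ℝ) (h : V.IsHermitian) (z : Fin d → ℝ) :
    (⨅ i, h.eigenvalues i) * (z ⬝ᵥ z) ≤ z ⬝ᵥ V *ᵥ z := by
  classical
  set U : Matrix (Fin d) (Fin d) ℝ := (h.eigenvectorUnitary : Matrix (Fin d) (Fin d) ℝ) with hU
  have hsU : star U = Uᵀ := by
    ext i j
    simp [Matrix.star_apply]
  set y : Fin d → ℝ := star U *ᵥ z with hy
  have hstar : ∀ w : Fin d → ℝ, z ⬝ᵥ U *ᵥ w = y ⬝ᵥ w := by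
    intro w
    rw [dotProduct_mulVec]
    congr 1
    rw [hy, hsU, mulVec_transpose]
  have hUy : U *ᵥ y = z := by
    rw [hy, mulVec_mulVec, (Matrix.mem_unitaryGroup_iff).mp (h.eigenvectorUnitary).2, one_mulVec]
  have hzz : z ⬝ᵥ z = y ⬝ᵥ y := by
    calc z ⬝ᵥ z = z ⬝ᵥ U *ᵥ y := by rw [hUy]
    _ = y ⬝ᵥ y := hstar y
  have hquad : z ⬝ᵥ V *ᵥ z = ∑ i, h.eigenvalues i * (y i) ^ 2 := by
    conv_lhs => rw [h.spectral_theorem, Unitary.conjStarAlgAut_apply, ← mulVec_mulVec, ← mulVec_mulVec, hstar]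
    simp [dotProduct, mulVec_diagonal]
    exact Finset.sum_congr rfl fun i _ => by ring
  rw [hquad, hzz]
  have : (⨅ i, h.eigenvalues i) * (y ⬝ᵥ y) = ∑ i, (⨅ i, h.eigenvalues i) * (y i)^2 := by
    simp [dotProduct, Finset.mul_sum]
    ring_nf
  rw [this]
  apply Finset.sum_le_sum
  intro i _
  have hle : (⨅ i, h.eigenvalues i) ≤ h.eigenvalues i :=
    ciInf_le (Set.Finite.bddBelow (Set.finite_range _)) i
  nlinarith [sq_nonneg (y i)]


theorem csDot {d : ℕ} (a b : Fin d → ℝ) : a ⬝ᵥ b ≤ eucNorm a * eucNorm b := by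
  have h := Real.sum_mul_le_sqrt_mul_sqrt (Finset.univ) a b
  simpa [eucNorm, dotProduct, sq] using h

theorem stmt15 {d : ℕ} (V : Matrix (Fin d) (Fin d) ℝ) (hV : V.PosDef)
    (θhat : Fin d → ℝ) (β : ℝ) (hβ : 0 ≤ β)
    (B : Set (Fin d → ℝ)) (hB : B = {θ : Fin d → ℝ | wnorm V (θhat - θ) ≤ β})
    (α rl rb : ℝ) (hα0 : 0 < α) (hα1 : α ≤ 1) (hrl : 0 < rl) (hlb : rl ≤ rb)
    (θstar ψstar ψb : Fin d → ℝ) (hθB : θstar ∈ B)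
    (hψstar : eucNorm ψstar ≤ 1) (hψb : eucNorm ψb ≤ 1)
    (hbase : ψb ⬝ᵥ θstar = rb)
    (h1 : ψstar ⬝ᵥ θstar ≥ rb)
    (hlmin : lamMin V ≥ (2 * (2 - α) * β / (α * rl)) ^ 2) :
    ψstar ⬝ᵥ θhat ≥ β / Real.sqrt (lamMin V) +
      (1 - α) * ⨆ v : B, ψb ⬝ᵥ (v : Fin d → ℝ) := by
  classical
  have h : V.IsHermitian := hV.isHermitian
  have hlam_eq : lamMin V = ⨅ i, h.eigenvalues i := dif_pos h
  rcases Nat.eq_zero_or_pos d with hd | hd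
  · exfalso
    subst hd
    have : ψb ⬝ᵥ θstar = 0 := by simp [dotProduct]
    rw [hbase] at this
    linarith
  have hne : Nonempty (Fin d) := ⟨⟨0, hd⟩⟩
  have hlampos : 0 < lamMin V := by
    rw [hlam_eq]
    obtain ⟨i, hi⟩ := exists_eq_ciInf_of_finite (f := h.eigenvalues)
    rw [← hi]
    exact hV.eigenvalues_pos i
  set s := Real.sqrt (lamMin V) with hsdef
  have hs : 0 < s := Real.sqrt_pos.2 hlampos
  -- weighted norm dominates euclidean norm
  have hwn : ∀ z : Fin d → ℝ, eucNorm z * s ≤ wnorm V z := by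
    intro z
    have hq : lamMin V * (z ⬝ᵥ z) ≤ z ⬝ᵥ V *ᵥ z := hlam_eq ▸ quadLB V h z
    have : Real.sqrt (lamMin V * (z ⬝ᵥ z)) ≤ wnorm V z := Real.sqrt_le_sqrt hq
    rw [Real.sqrt_mul hlampos.le] at this
    rw [eucNorm, mul_comm]
    exact this
  have heucnn : ∀ z : Fin d → ℝ, 0 ≤ eucNorm z := fun z => Real.sqrt_nonneg _
  -- key bound
  have bound : ∀ ψ w : Fin d → ℝ, eucNorm ψ ≤ 1 → wnorm V w ≤ β → ψ ⬝ᵥ w ≤ β / s := by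
    intro ψ w hψ hw
    have h1 : ψ ⬝ᵥ w ≤ eucNorm ψ * eucNorm w := csDot ψ w
    have h2 : eucNorm w ≤ β / s := by
      rw [le_div_iff₀ hs]
      exact (hwn w).trans hw
    have h3 : eucNorm ψ * eucNorm w ≤ 1 * (β / s) :=
      mul_le_mul hψ h2 (heucnn w) zero_le_one
    linarith
  have hnegnorm : ∀ ψ : Fin d → ℝ, eucNorm (-ψ) = eucNorm ψ := by
    intro ψ; simp [eucNorm]
  -- two-sided bounds for θ ∈ B
  have key : ∀ ψ : Fin d → ℝ, eucNorm ψ ≤ 1 → ∀ θ ∈ B,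
      ψ ⬝ᵥ θ ≤ ψ ⬝ᵥ θhat + β / s ∧ ψ ⬝ᵥ θhat ≤ ψ ⬝ᵥ θ + β / s := by
    intro ψ hψ θ hθ
    rw [hB] at hθ
    have hw : wnorm V (θhat - θ) ≤ β := hθ
    have hpos := bound ψ (θhat - θ) hψ hw
    have hneg := bound (-ψ) (θhat - θ) (by rw [hnegnorm]; exact hψ) hw
    rw [dotProduct_sub] at hpos
    rw [neg_dotProduct, dotProduct_sub] at hneg
    constructor <;> linarith
  set ε := β / s with hεdef
  have hεnn : 0 ≤ ε := div_nonneg hβ hs.le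
  -- sup bound
  have hsup : (⨆ v : B, ψb ⬝ᵥ (v : Fin d → ℝ)) ≤ rb + 2 * ε := by
    have hBne : Nonempty B := ⟨⟨θstar, hθB⟩⟩
    apply ciSup_le
    intro v
    have hv := (key ψb hψb v v.2).1
    have hθs := (key ψb hψb θstar hθB).2
    rw [hbase] at hθs
    linarith
  -- lower bound on ψstar ⬝ᵥ θhat
  have hlow : rb - ε ≤ ψstar ⬝ᵥ θhat := by
    have := (key ψstar hψstar θstar hθB).1
    linarith
  -- the eigenvalue condition
  have hc : 0 ≤ 2 * (2 - α) * β / (α * rl) :=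
    div_nonneg (by nlinarith) (by positivity)
  have hsge : 2 * (2 - α) * β / (α * rl) ≤ s := by
    rw [hsdef]
    calc 2 * (2 - α) * β / (α * rl) = Real.sqrt ((2 * (2 - α) * β / (α * rl)) ^ 2) :=
          (Real.sqrt_sq hc).symm
    _ ≤ Real.sqrt (lamMin V) := Real.sqrt_le_sqrt hlmin
  have hεb : 2 * (2 - α) * ε ≤ α * rl := by
    have h2 : 2 * (2 - α) * β ≤ α * rl * s := by
      have h3 := mul_le_mul_of_nonneg_left hsge (le_of_lt (by positivity : (0:ℝ) < α * rl))
      calc 2 * (2 - α) * β = α * rl * (2 * (2 - α) * β / (α * rl)) := by field_simp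
      _ ≤ α * rl * s := h3
    have h4 : 2 * (2 - α) * ε * s ≤ α * rl * s := by
      have h5 : 2 * (2 - α) * ε * s = 2 * (2 - α) * β := by
        rw [hεdef]; field_simp
      linarith
    exact le_of_mul_le_mul_right h4 hs
  have hsupmul : (1 - α) * (⨆ v : B, ψb ⬝ᵥ (v : Fin d → ℝ)) ≤ (1 - α) * (rb + 2 * ε) :=
    mul_le_mul_of_nonneg_left hsup (by linarith)
  have hrb : α * rl ≤ α * rb := mul_le_mul_of_nonneg_left hlb hα0.le
  rw [ge_iff_le]
  linarith [hsupmul, hlow, hεb, hrb, hεnn]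
end

section
/- Let V be a symmetric positive definite real d×d matrix, θ̂ ∈ ℝ^d, β ≥ 0, and B := {θ ∈ ℝ^d : ‖θ̂ − θ‖_V ≤ β}. Let α ∈ ℝ, φ, ψ, ψ_b ∈ ℝ^d with ‖φ‖₂ ≤ 1, and set S := sup_{v ∈ B} ψ_bᵀ v. If ψᵀθ̂ ≥ β/√(λ_min(V)) + (1 − α)·S and φᵀθ̂ ≥ ψᵀθ̂, then for every v ∈ B one has φᵀv ≥ (1 − α)·S; in particular inf_{v ∈ B} φᵀv ≥ (1 − α)·sup_{v ∈ B} ψ_bᵀv. -/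
open Matrix

lemma lamMin_mul_le {d : ℕ} (V : Matrix (Fin d) (Fin d) ℝ) (hV : V.IsHermitian)
    (z : Fin d → ℝ) : lamMin V * (z ⬝ᵥ z) ≤ z ⬝ᵥ V.mulVec z := by
  classical
  set c := lamMin V with hc
  have hpsd : ((V - c • (1 : Matrix (Fin d) (Fin d) ℝ))).PosSemidef := by
    have hU := hV.spectral_theorem
    have h1 : (c • (1 : Matrix (Fin d) (Fin d) ℝ)) =
        (hV.eigenvectorUnitary : Matrix (Fin d) (Fin d) ℝ) * (c • 1) *
          (star (hV.eigenvectorUnitary : Matrix (Fin d) (Fin d) ℝ)) := by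
      rw [mul_smul_comm, smul_mul_assoc, mul_one,
        (Matrix.mem_unitaryGroup_iff).mp (hV.eigenvectorUnitary).2]
    have hdiff : V - c • (1 : Matrix (Fin d) (Fin d) ℝ) =
        (hV.eigenvectorUnitary : Matrix (Fin d) (Fin d) ℝ) *
          (diagonal (fun i => hV.eigenvalues i - c)) *
          (star (hV.eigenvectorUnitary : Matrix (Fin d) (Fin d) ℝ)) := by
      conv_lhs => rw [hU, h1, Unitary.conjStarAlgAut_apply]
      rw [← sub_mul, ← mul_sub]
      congr 2
      rw [← diagonal_one, ← diagonal_smul, diagonal_sub]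
      funext i
      simp [Function.comp]
    rw [hdiff]
    have hstar : ((star (hV.eigenvectorUnitary : Matrix (Fin d) (Fin d) ℝ)) :
        Matrix (Fin d) (Fin d) ℝ)
        = ((hV.eigenvectorUnitary : Matrix (Fin d) (Fin d) ℝ))ᴴ := rfl
    rw [hstar]
    apply Matrix.PosSemidef.mul_mul_conjTranspose_same
    refine Matrix.posSemidef_diagonal_iff.mpr fun i => ?_
    have hle : c ≤ hV.eigenvalues i := by
      have : Nonempty (Fin d) := ⟨i⟩
      rw [hc, lamMin, dif_pos hV]
      exact ciInf_le (Finite.bddBelow_range _) i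
    linarith
  have := hpsd.dotProduct_mulVec_nonneg z
  simp only [star_trivial, sub_mulVec, dotProduct_sub, smul_mulVec, one_mulVec,
    dotProduct_smul, smul_eq_mul] at this
  linarith

theorem stmt17 {d : ℕ} (V : Matrix (Fin d) (Fin d) ℝ) (hV : V.PosDef)
    (θhat : Fin d → ℝ) (β : ℝ) (hβ : 0 ≤ β)
    (B : Set (Fin d → ℝ)) (hB : B = {θ : Fin d → ℝ | wnorm V (θhat - θ) ≤ β})
    (α : ℝ) (φ ψ ψb : Fin d → ℝ) (hφ : eucNorm φ ≤ 1)
    (S : ℝ) (hS : S = ⨆ v : B, ψb ⬝ᵥ (v : Fin d → ℝ))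
    (h1 : ψ ⬝ᵥ θhat ≥ β / Real.sqrt (lamMin V) + (1 - α) * S)
    (h2 : φ ⬝ᵥ θhat ≥ ψ ⬝ᵥ θhat) :
    (∀ v ∈ B, φ ⬝ᵥ v ≥ (1 - α) * S) ∧
      (⨅ v : B, φ ⬝ᵥ (v : Fin d → ℝ)) ≥
        (1 - α) * ⨆ v : B, ψb ⬝ᵥ (v : Fin d → ℝ) := by
  classical
  have hH : V.IsHermitian := hV.1
  have key : ∀ v ∈ B, φ ⬝ᵥ v ≥ (1 - α) * S := by
    intro v hv
    set z : Fin d → ℝ := θhat - v with hz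
    have hzz : 0 ≤ z ⬝ᵥ z := Finset.sum_nonneg fun i _ => mul_self_nonneg _
    have hwn : wnorm V z ≤ β := by rw [hB] at hv; exact hv
    have hVz : z ⬝ᵥ V.mulVec z ≤ β ^ 2 := by
      have h0 : 0 ≤ z ⬝ᵥ V.mulVec z := by simpa using hV.posSemidef.dotProduct_mulVec_nonneg z
      have := Real.sqrt_le_sqrt (Real.sq_sqrt h0 ▸ pow_le_pow_left₀ (Real.sqrt_nonneg _) hwn 2)
      calc z ⬝ᵥ V.mulVec z = Real.sqrt (z ⬝ᵥ V.mulVec z) ^ 2 := (Real.sq_sqrt h0).symm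
        _ ≤ β ^ 2 := pow_le_pow_left₀ (Real.sqrt_nonneg _) hwn 2
    -- bound on euclidean norm of z
    have heuc : eucNorm z ≤ β / Real.sqrt (lamMin V) := by
      rcases Nat.eq_zero_or_pos d with hd | hd
      · have : z ⬝ᵥ z = 0 := by
          subst hd
          simp [dotProduct]
        rw [eucNorm, this, Real.sqrt_zero]
        exact div_nonneg hβ (Real.sqrt_nonneg _)
      · have : Nonempty (Fin d) := ⟨⟨0, hd⟩⟩
        have hlam : 0 < lamMin V := by
          rw [lamMin, dif_pos hH]
          obtain ⟨i, hi⟩ := exists_eq_ciInf_of_finite (f := hH.eigenvalues)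
          rw [← hi]
          exact hV.eigenvalues_pos i
        have hle : z ⬝ᵥ z ≤ β ^ 2 / lamMin V := by
          rw [le_div_iff₀ hlam]
          calc z ⬝ᵥ z * lamMin V = lamMin V * (z ⬝ᵥ z) := by ring
            _ ≤ z ⬝ᵥ V.mulVec z := lamMin_mul_le V hH z
            _ ≤ β ^ 2 := hVz
        calc eucNorm z = Real.sqrt (z ⬝ᵥ z) := rfl
          _ ≤ Real.sqrt (β ^ 2 / lamMin V) := Real.sqrt_le_sqrt hle
          _ = β / Real.sqrt (lamMin V) := by
              rw [Real.sqrt_div (by positivity), Real.sqrt_sq hβ]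
    -- Cauchy-Schwarz
    have hCS : φ ⬝ᵥ z ≤ eucNorm φ * eucNorm z := by
      have hcs := Finset.sum_mul_sq_le_sq_mul_sq Finset.univ φ z
      have h1' : φ ⬝ᵥ z ≤ Real.sqrt ((φ ⬝ᵥ z) ^ 2) := by
        rw [Real.sqrt_sq_eq_abs]; exact le_abs_self _
      have h2' : Real.sqrt ((φ ⬝ᵥ z) ^ 2) ≤ Real.sqrt ((φ ⬝ᵥ φ) * (z ⬝ᵥ z)) := by
        apply Real.sqrt_le_sqrt
        calc (φ ⬝ᵥ z) ^ 2 = (∑ i, φ i * z i) ^ 2 := rfl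
          _ ≤ (∑ i, φ i ^ 2) * (∑ i, z i ^ 2) := hcs
          _ = (φ ⬝ᵥ φ) * (z ⬝ᵥ z) := by simp [dotProduct, pow_two]
      have h3' : Real.sqrt ((φ ⬝ᵥ φ) * (z ⬝ᵥ z)) = eucNorm φ * eucNorm z :=
        Real.sqrt_mul (Finset.sum_nonneg fun i _ => mul_self_nonneg _) _
      linarith
    have hφz : φ ⬝ᵥ z ≤ β / Real.sqrt (lamMin V) := by
      have h0 : 0 ≤ eucNorm z := Real.sqrt_nonneg _
      have : eucNorm φ * eucNorm z ≤ eucNorm z := by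
        nlinarith [Real.sqrt_nonneg (φ ⬝ᵥ φ)]
      linarith
    have hsplit : φ ⬝ᵥ z = φ ⬝ᵥ θhat - φ ⬝ᵥ v := by
      rw [hz, dotProduct_sub]
    linarith
  refine ⟨key, ?_⟩
  rw [← hS]
  have hθ : θhat ∈ B := by
    rw [hB]
    simp [Set.mem_setOf_eq, wnorm, sub_self, hβ]
  have : Nonempty B := ⟨⟨θhat, hθ⟩⟩
  exact le_ciInf fun v => key v v.2
end

section
/- Let M ≥ 1 be an integer, ρ ∈ (0,1), d ≥ 1 an integer, δ ∈ (0,1), and set L := log(d/δ) > 0. Let σ ≥ 0, λ > 0, α ∈ (0,1], r_l > 0, T ≥ 0, and define β₀ := σ·√(2·log(1/δ)) + √λ and C := (2(2 − α)·β₀/(α r_l))² − (λ + M·T); assume C ≥ 0. If N ≥ 0 satisfies 2Mρ(1 − ρ)·N + C ≤ √(32·M·ρ²(1 − ρ)²·N·L), then N ≥ (4/M)·L − C/(2Mρ(1 − ρ)) − √((16/M²)·L² − 4·C·L/(M²ρ(1 − ρ))) and N ≤ √((96/M²)·L² − 16·C·L/(M²ρ(1 − ρ))). -/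
private lemma stmt19_aux (m r L C N : ℝ) (hm : 0 < m) (hr : 0 < r)
    (hL0 : 0 < L) (hC0 : 0 ≤ C) (hN : 0 ≤ N)
    (key : (2 * m * r * N + C) ^ 2 ≤ 32 * m * r ^ 2 * N * L) :
    (4 / m) * L - C / (2 * m * r) -
        Real.sqrt ((16 / m ^ 2) * L ^ 2 - 4 * C * L / (m ^ 2 * r)) ≤ N ∧
      N ≤ Real.sqrt ((96 / m ^ 2) * L ^ 2 - 16 * C * L / (m ^ 2 * r)) := by
  have hmne : m ≠ 0 := ne_of_gt hm
  have hrne : r ≠ 0 := ne_of_gt hr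
  constructor
  · have core : (8 * L * r - C - 2 * m * r * N) ^ 2
        ≤ 64 * L ^ 2 * r ^ 2 - 16 * C * L * r := by nlinarith [key]
    have hx : (4 / m) * L - C / (2 * m * r) - N
        = (8 * L * r - C - 2 * m * r * N) / (2 * m * r) := by
      field_simp; ring
    have hD : (16 / m ^ 2) * L ^ 2 - 4 * C * L / (m ^ 2 * r)
        = (64 * L ^ 2 * r ^ 2 - 16 * C * L * r) / (4 * m ^ 2 * r ^ 2) := by
      field_simp; ring
    have hstep : (4 / m) * L - C / (2 * m * r) - N
        ≤ Real.sqrt ((16 / m ^ 2) * L ^ 2 - 4 * C * L / (m ^ 2 * r)) := by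
      apply Real.le_sqrt_of_sq_le
      rw [hx, hD, div_pow, div_le_div_iff₀ (by positivity) (by positivity)]
      nlinarith [mul_le_mul_of_nonneg_right core
        (show (0:ℝ) ≤ 4 * m ^ 2 * r ^ 2 by positivity)]
    linarith
  · apply Real.le_sqrt_of_sq_le
    have hE : (96 / m ^ 2) * L ^ 2 - 16 * C * L / (m ^ 2 * r)
        = (96 * r * L ^ 2 - 16 * C * L) / (m ^ 2 * r) := by
      field_simp
    rw [hE, le_div_iff₀ (by positivity)]
    rcases eq_or_lt_of_le hN with hN0 | hN0
    · rw [← hN0] at key ⊢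
      have hCz : C ≤ 0 := by nlinarith [key]
      nlinarith [mul_pos (mul_pos hr hL0) hL0, hC0, hCz, hL0]
    · have h8 : 8 * m * r * N * C ≤ 32 * m * r ^ 2 * N * L := by
        nlinarith [key, sq_nonneg (2 * m * r * N - C)]
      have hC4 : C ≤ 4 * r * L := by
        have hp : 0 < 8 * m * r * N := by positivity
        have := (mul_le_mul_iff_of_pos_right hp).mp
          (by nlinarith [h8] : C * (8 * m * r * N) ≤ (4 * r * L) * (8 * m * r * N))
        exact this
      have hiv : m * r * N ≤ 8 * r * L - C := by
        have hp : 0 < 4 * m * r * N := by positivity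
        have h3 : (m * r * N) * (4 * m * r * N) ≤ (8 * r * L - C) * (4 * m * r * N) := by
          nlinarith [key, sq_nonneg C]
        exact (mul_le_mul_iff_of_pos_right hp).mp h3
      nlinarith [mul_le_mul hiv hiv (by positivity)
          (by linarith [hC4] : (0:ℝ) ≤ 8 * r * L - C),
        hC4, hC0, mul_pos hr hL0]

theorem stmt19 (M d : ℕ) (hM : 1 ≤ M) (hd : 1 ≤ d)
    (ρ δ σ lam α rl T : ℝ)
    (hρ0 : 0 < ρ) (hρ1 : ρ < 1) (hδ0 : 0 < δ) (hδ1 : δ < 1)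
    (hσ : 0 ≤ σ) (hlam : 0 < lam) (hα0 : 0 < α) (hα1 : α ≤ 1)
    (hrl : 0 < rl) (hT : 0 ≤ T)
    (L β₀ C : ℝ)
    (hL : L = Real.log (d / δ)) (hL0 : 0 < L)
    (hβ₀ : β₀ = σ * Real.sqrt (2 * Real.log (1 / δ)) + Real.sqrt lam)
    (hC : C = (2 * (2 - α) * β₀ / (α * rl)) ^ 2 - (lam + M * T))
    (hC0 : 0 ≤ C)
    (N : ℝ) (hN : 0 ≤ N)
    (h : 2 * M * ρ * (1 - ρ) * N + C ≤
      Real.sqrt (32 * M * ρ ^ 2 * (1 - ρ) ^ 2 * N * L)) :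
    (4 / M) * L - C / (2 * M * ρ * (1 - ρ)) -
        Real.sqrt ((16 / M ^ 2) * L ^ 2 - 4 * C * L / (M ^ 2 * ρ * (1 - ρ))) ≤ N ∧
      N ≤ Real.sqrt ((96 / M ^ 2) * L ^ 2 - 16 * C * L / (M ^ 2 * ρ * (1 - ρ))) := by
  have hm0 : (0:ℝ) < (M:ℝ) := by exact_mod_cast Nat.lt_of_lt_of_le Nat.zero_lt_one hM
  have hρ1' : 0 < 1 - ρ := by linarith
  have hr0 : 0 < ρ * (1 - ρ) := mul_pos hρ0 hρ1'
  have h0 : 0 ≤ 2 * (M:ℝ) * ρ * (1 - ρ) * N + C := by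
    have : (0:ℝ) ≤ 2 * (M:ℝ) * ρ * (1 - ρ) * N :=
      mul_nonneg (by nlinarith) hN
    linarith
  have harg : 0 ≤ 32 * (M:ℝ) * ρ ^ 2 * (1 - ρ) ^ 2 * N * L :=
    mul_nonneg (mul_nonneg (by positivity) hN) hL0.le
  have key : (2 * (M:ℝ) * (ρ * (1 - ρ)) * N + C) ^ 2
      ≤ 32 * (M:ℝ) * (ρ * (1 - ρ)) ^ 2 * N * L := by
    have h2 := pow_le_pow_left₀ h0 h 2
    rw [Real.sq_sqrt harg] at h2
    calc (2 * (M:ℝ) * (ρ * (1 - ρ)) * N + C) ^ 2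
        = (2 * (M:ℝ) * ρ * (1 - ρ) * N + C) ^ 2 := by ring
      _ ≤ 32 * (M:ℝ) * ρ ^ 2 * (1 - ρ) ^ 2 * N * L := h2
      _ = 32 * (M:ℝ) * (ρ * (1 - ρ)) ^ 2 * N * L := by ring
  obtain ⟨h1, h2⟩ := stmt19_aux (M:ℝ) (ρ * (1 - ρ)) L C N hm0 hr0 hL0 hC0 hN key
  have e1 : ((M:ℝ) ^ 2 * ρ * (1 - ρ)) = (M:ℝ) ^ 2 * (ρ * (1 - ρ)) := by ring
  have e2 : (2 * (M:ℝ) * ρ * (1 - ρ)) = 2 * (M:ℝ) * (ρ * (1 - ρ)) := by ring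
  rw [e1, e2]
  exact ⟨h1, h2⟩
end
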